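/- Let (G, sI, λ) be a synthesis game for a specification φ ⊆ Σ^ω with parity objective Φ = Parity(p). Then φ is Moore realizable if and only if sI ∈ Win1(Φ). (In particular, every Moore transducer T with L(T) ⊆ φ induces a sure winning strategy of player 1 from sI for Φ, and every memoryless sure winning strategy of player 1 from sI for Φ induces a Moore transducer T with L(T) ⊆ φ.) -/

import Mathlib

open scoped Classical
noncomputable section

/-! ### Deterministic two-player games on graphs -/

/-- The set of states occurring infinitely often in a play. -/
def infSet {S : Type} (π : ℕ → S) : Set S :=
  {t | ∀ N : ℕ, ∃ k : ℕ, N ≤ k ∧ π k = t}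

/-- Parity objective: the minimal priority occurring infinitely often is even. -/
def ParityObj {S : Type} (p : S → ℕ) : Set (ℕ → S) :=
  {π | Even (sInf (p '' infSet π))}

/-- Co-parity objective: the minimal priority occurring infinitely often is odd.
This is the complement of `ParityObj p`. -/
def CoparityObj {S : Type} (p : S → ℕ) : Set (ℕ → S) :=
  {π | Odd (sInf (p '' infSet π))}

/-- Safety objective: only states of `F` are visited. -/
def SafeObj {S : Type} (F : Set S) : Set (ℕ → S) := {π | ∀ k : ℕ, π k ∈ F}

/-- Reachability objective: some state of `F` is visited. -/
def ReachObj {S : Type} (F : Set S) : Set (ℕ → S) := {π | ∃ k : ℕ, π k ∈ F}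

/-- Büchi objective: some state of `F` is visited infinitely often. -/
def BuchiObj {S : Type} (F : Set S) : Set (ℕ → S) := {π | ∃ t ∈ F, t ∈ infSet π}

/-- A deterministic game graph: a finite directed graph in which every state
has at least one successor, together with the set `S1` of player-1 states
(the remaining states belong to player 2). -/
structure DetGame (S : Type) [Fintype S] where
  E : S → S → Prop
  S1 : Set S
  exists_succ : ∀ s : S, ∃ t : S, E s t

namespace DetGame

variable {S : Type} [Fintype S]

/-- Player-2 states. -/
def S2 (G : DetGame S) : Set S := G.S1ᶜ

/-- A play: an infinite sequence of states following edges. -/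
def IsPlay (G : DetGame S) (π : ℕ → S) : Prop := ∀ k : ℕ, G.E (π k) (π (k + 1))

/-- A strategy for player 1: given the history of states strictly before the
current state, and the current state, it chooses a successor, which must be
along an edge whenever the current state is a player-1 state. -/
structure Strat1 (G : DetGame S) where
  f : List S → S → S
  valid : ∀ (h : List S) (s : S), s ∈ G.S1 → G.E s (f h s)

/-- A strategy for player 2. -/
structure Strat2 (G : DetGame S) where
  f : List S → S → S
  valid : ∀ (h : List S) (s : S), s ∈ G.S2 → G.E s (f h s)

/-- A memoryless strategy depends only on the current state. -/
def Strat1.Memoryless {G : DetGame S} (α : Strat1 G) : Prop :=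
  ∀ (h h' : List S) (s : S), α.f h s = α.f h' s

def Strat2.Memoryless {G : DetGame S} (β : Strat2 G) : Prop :=
  ∀ (h h' : List S) (s : S), β.f h s = β.f h' s

/-- The (history, current state) pair after `k` steps of the play from `s`
where player 1 follows `α` and player 2 follows `β`. -/
def histPair (G : DetGame S) (α : Strat1 G) (β : Strat2 G) (s : S) :
    ℕ → List S × S
  | 0 => ([], s)
  | k + 1 =>
    let p := histPair G α β s k
    (p.1 ++ [p.2], if p.2 ∈ G.S1 then α.f p.1 p.2 else β.f p.1 p.2)

/-- The unique play from `s` when player 1 follows `α` and player 2 follows `β`. -/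
def outcome (G : DetGame S) (s : S) (α : Strat1 G) (β : Strat2 G) : ℕ → S :=
  fun k => (histPair G α β s k).2

/-- Sure winning set of player 1 for objective `Φ`. -/
def Win1 (G : DetGame S) (Φ : Set (ℕ → S)) : Set S :=
  {s | ∃ α : Strat1 G, ∀ β : Strat2 G, G.outcome s α β ∈ Φ}

/-- Sure winning set of player 2 for objective `Φ`. -/
def Win2 (G : DetGame S) (Φ : Set (ℕ → S)) : Set S :=
  {s | ∃ β : Strat2 G, ∀ α : Strat1 G, G.outcome s α β ∈ Φ}

/-- Cooperative winning set: both players together can achieve `Φ`. -/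
def Win12 (G : DetGame S) (Φ : Set (ℕ → S)) : Set S :=
  {s | ∃ (α : Strat1 G) (β : Strat2 G), G.outcome s α β ∈ Φ}

/-- The set of player-2 edges. -/
def E2 (G : DetGame S) : Set (S × S) := {e | G.E e.1 e.2 ∧ e.1 ∈ G.S2}

/-- The objective "either some forbidden edge of `Es` is taken, or the play
remains in the safety component `Safe(Win12(Φ))` of `Φ`". -/
def AssumeSafe (G : DetGame S) (Es : Set (S × S)) (Φ : Set (ℕ → S)) :
    Set (ℕ → S) :=
  {π | (∃ i : ℕ, (π i, π (i + 1)) ∈ Es) ∨ π ∈ SafeObj (G.Win12 Φ)}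

/-- A safety assumption `Es` is safe-sufficient for a state `s` and an
objective `Φ` if player 1 wins `AssumeSafe Es Φ` from `s`. -/
def SafeSufficient (G : DetGame S) (Es : Set (S × S)) (s : S)
    (Φ : Set (ℕ → S)) : Prop :=
  s ∈ G.Win1 (G.AssumeSafe Es Φ)

/-- A safety assumption `Es` is restrictive for `s` and `Φ` if some pair of
strategies produces a play that uses an edge of `Es` and stays in the safety
component of `Φ`. -/
def Restrictive (G : DetGame S) (Es : Set (S × S)) (s : S)
    (Φ : Set (ℕ → S)) : Prop :=
  ∃ (α : Strat1 G) (β : Strat2 G),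
    (∃ i : ℕ, (G.outcome s α β i, G.outcome s α β (i + 1)) ∈ Es) ∧
      G.outcome s α β ∈ SafeObj (G.Win12 Φ)

/-- The objective "either the strong fairness assumption on `El` is violated
(some source state of an edge in `El` repeats forever while the target of
that edge does not), or `Φ` holds". -/
def AssumeFair (G : DetGame S) (El : Set (S × S)) (Φ : Set (ℕ → S)) :
    Set (ℕ → S) :=
  {π | (∃ e ∈ El, e.1 ∈ infSet π ∧ e.2 ∉ infSet π) ∨ π ∈ Φ}

end DetGame

/-! ### Transducers and synthesis games -/

/-- A Moore transducer with input alphabet `Set I` and output alphabet `Set O`. -/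
structure Moore (I O : Type) where
  Q : Type
  fin : Finite Q
  qI : Q
  tr : Q → Set I → Q
  out : Q → Set O

namespace Moore

variable {I O : Type} (T : Moore I O)

/-- The run of the transducer over an infinite input word. -/
def run (w : ℕ → Set I) : ℕ → T.Q
  | 0 => T.qI
  | i + 1 => T.tr (run w i) (w i)

/-- The infinite word over `Set I × Set O` generated by the run on `w`. -/
def output (w : ℕ → Set I) : ℕ → Set I × Set O :=
  fun i => (w i, T.out (T.run w i))

/-- The language of the transducer. -/
def lang : Set (ℕ → Set I × Set O) := {x | ∃ w : ℕ → Set I, x = T.output w}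

end Moore

/-- A specification is (Moore) realizable if some Moore transducer
implements it. -/
def MooreRealizable {I O : Type} (L : Set (ℕ → Set I × Set O)) : Prop :=
  ∃ T : Moore I O, T.lang ⊆ L

/-- `ψ` is a sufficient environment assumption for `φ` if `ψᶜ ∪ φ` is
(Moore) realizable. -/
def SufficientAssumption {I O : Type} (φ ψ : Set (ℕ → Set I × Set O)) : Prop :=
  MooreRealizable (ψᶜ ∪ φ)

/-- A Mealy transducer with input alphabet `Set O` and output alphabet `Set I`
(an environment). -/
structure Mealy (I O : Type) where
  Q : Type
  fin : Finite Q
  qI : Q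
  tr : Q → Set O → Q
  out : Q → Set O → Set I

namespace Mealy

variable {I O : Type} (T : Mealy I O)

def run (w : ℕ → Set O) : ℕ → T.Q
  | 0 => T.qI
  | i + 1 => T.tr (run w i) (w i)

def output (w : ℕ → Set O) : ℕ → Set I × Set O :=
  fun i => (T.out (T.run w i) (w i), w i)

def lang : Set (ℕ → Set I × Set O) := {x | ∃ w : ℕ → Set O, x = T.output w}

end Mealy

/-- `ψ` is realizable for the environment if some Mealy transducer with
input alphabet `Set O` and output alphabet `Set I` implements it. -/
def EnvRealizable {I O : Type} (ψ : Set (ℕ → Set I × Set O)) : Prop :=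
  ∃ T : Mealy I O, T.lang ⊆ ψ

/-- A synthesis game: a bipartite deterministic game graph with an initial
player-1 state, whose player-1 states are labeled by input letters and whose
player-2 states are labeled by output letters, deterministic and complete
with respect to the labels. -/
structure SynthGame (S : Type) [Fintype S] (I O : Type) extends DetGame S where
  sI : S
  sI_mem : sI ∈ S1
  bipartite : ∀ s t : S, E s t → (s ∈ S1 ∧ t ∉ S1) ∨ (s ∉ S1 ∧ t ∈ S1)
  labI : S → Set I
  labO : S → Set O
  labelDet1 : ∀ s t t' : S, s ∈ S1 → E s t → E s t' → labO t = labO t' → t = t'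
  labelDet2 : ∀ s t t' : S, s ∉ S1 → E s t → E s t' → labI t = labI t' → t = t'
  complete1 : ∀ s ∈ S1, ∀ o : Set O, ∃ t : S, E s t ∧ labO t = o
  complete2 : ∀ s ∉ S1, ∀ i : Set I, ∃ t : S, E s t ∧ labI t = i

namespace SynthGame

variable {S I O : Type} [Fintype S] (SG : SynthGame S I O)

/-- The infinite word over `Set I × Set O` corresponding to a play from `sI`. -/
def word (π : ℕ → S) : ℕ → Set I × Set O :=
  fun i => (SG.labI (π (2 * i + 2)), SG.labO (π (2 * i + 1)))

/-- `SG` with priority function `p` is a synthesis game for the specification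
`φ`: a play from `sI` satisfies the parity objective iff its word is in `φ`. -/
def IsGameFor (p : S → ℕ) (φ : Set (ℕ → Set I × Set O)) : Prop :=
  ∀ π : ℕ → S, SG.toDetGame.IsPlay π → π 0 = SG.sI →
    (π ∈ ParityObj p ↔ SG.word π ∈ φ)

/-- The environment assumption defined by a safety assumption `Es`:
words of plays from `sI` never using an edge of `Es`. -/
def psiSafety (Es : Set (S × S)) : Set (ℕ → Set I × Set O) :=
  {w | ∃ π : ℕ → S, SG.toDetGame.IsPlay π ∧ π 0 = SG.sI ∧ SG.word π = w ∧
    ∀ i : ℕ, (π i, π (i + 1)) ∉ Es}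

/-- The environment assumption defined by a strongly fair assumption `El`:
words of plays from `sI` in which, for every edge of `El`, either the source
occurs only finitely often or the edge is taken infinitely often. -/
def psiFair (El : Set (S × S)) : Set (ℕ → Set I × Set O) :=
  {w | ∃ π : ℕ → S, SG.toDetGame.IsPlay π ∧ π 0 = SG.sI ∧ SG.word π = w ∧
    ∀ e ∈ El, e.1 ∉ infSet π ∨
      ∀ N : ℕ, ∃ k : ℕ, N ≤ k ∧ π k = e.1 ∧ π (k + 1) = e.2}

end SynthGame

namespace ZAux

variable {S : Type}

lemma infSet_shift (π : ℕ → S) (N : ℕ) : infSet (fun k => π (k + N)) = infSet π := by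
  ext t
  constructor
  · intro h M
    obtain ⟨k, hk, he⟩ := h M
    exact ⟨k + N, le_trans hk (Nat.le_add_right _ _), he⟩
  · intro h M
    obtain ⟨k, hk, he⟩ := h (M + N)
    refine ⟨k - N, ?_, ?_⟩
    · omega
    · show π (k - N + N) = t
      have : k - N + N = k := by omega
      rw [this]; exact he

lemma parity_shift (π : ℕ → S) (N : ℕ) (p : S → ℕ) :
    (fun k => π (k + N)) ∈ ParityObj p ↔ π ∈ ParityObj p := by
  simp [ParityObj, infSet_shift]

lemma exists_io_mem [Fintype S] (π : ℕ → S) (T : Set S)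
    (hT : ∀ N, ∃ k, N ≤ k ∧ π k ∈ T) : ∃ t ∈ T, t ∈ infSet π := by
  by_contra hc
  push_neg at hc
  have hN : ∀ t : S, ∃ N : ℕ, t ∈ T → ∀ k, N ≤ k → π k ≠ t := by
    intro t
    by_cases ht : t ∈ T
    · have := hc t ht
      simp only [infSet, Set.mem_setOf_eq] at this
      push_neg at this
      obtain ⟨N, hNk⟩ := this
      exact ⟨N, fun _ k hk => hNk k hk⟩
    · exact ⟨0, fun h => absurd h ht⟩
  choose f hf using hN
  set M := Finset.univ.sup f with hM
  obtain ⟨k, hk, hkT⟩ := hT M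
  exact hf (π k) hkT k (le_trans (Finset.le_sup (Finset.mem_univ (π k))) hk) rfl

lemma infSet_nonempty [Fintype S] (π : ℕ → S) : (infSet π).Nonempty := by
  obtain ⟨t, _, ht⟩ := exists_io_mem π Set.univ (fun N => ⟨N, le_rfl, Set.mem_univ _⟩)
  exact ⟨t, ht⟩

lemma sInf_image_add_one {A : Set ℕ} (hA : A.Nonempty) :
    sInf ((· + 1) '' A) = sInf A + 1 := by
  have h1 : sInf A ∈ A := Nat.sInf_mem hA
  have h2 : sInf ((· + 1) '' A) ∈ (· + 1) '' A := Nat.sInf_mem (hA.image _)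
  obtain ⟨b, hb, hbe⟩ := h2
  have hle : sInf ((· + 1) '' A) ≤ sInf A + 1 := Nat.sInf_le ⟨sInf A, h1, rfl⟩
  have hge : sInf A ≤ b := Nat.sInf_le hb
  have hbe' : b + 1 = sInf ((· + 1) '' A) := hbe
  omega

lemma parity_succ_iff [Fintype S] (π : ℕ → S) (p : S → ℕ) :
    π ∈ ParityObj (fun s => p s + 1) ↔ π ∉ ParityObj p := by
  have himg : (fun s => p s + 1) '' infSet π = (· + 1) '' (p '' infSet π) := by
    rw [Set.image_image]
  have hne : (p '' infSet π).Nonempty := (infSet_nonempty π).image _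
  simp only [ParityObj, Set.mem_setOf_eq, himg, sInf_image_add_one hne, Nat.even_add_one]

lemma parity_add_two [Fintype S] (π : ℕ → S) (p : S → ℕ) :
    π ∈ ParityObj (fun s => p s + 1 + 1) ↔ π ∈ ParityObj p := by
  rw [parity_succ_iff π (fun s => p s + 1), parity_succ_iff π p]
  tauto

end ZAux

namespace ZAux

variable {S : Type}

/-- Plays of the raw edge relation. -/
def PlayOn (E : S → S → Prop) (π : ℕ → S) : Prop := ∀ k, E (π k) (π (k + 1))

/-- Plays consistent with the memoryless strategy `σ` at states of `P`. -/
def Cons (E : S → S → Prop) (P : Set S) (σ : S → S) (π : ℕ → S) : Prop :=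
  PlayOn E π ∧ ∀ k, π k ∈ P → π (k + 1) = σ (π k)

/-- Every play from `s` consistent with `σ` at `P`-states satisfies parity `p`. -/
def WinsFrom (E : S → S → Prop) (P : Set S) (σ : S → S) (p : S → ℕ) (s : S) : Prop :=
  ∀ π, π 0 = s → Cons E P σ π → π ∈ ParityObj p

lemma cons_shift {E : S → S → Prop} {P : Set S} {σ : S → S} {π : ℕ → S}
    (h : Cons E P σ π) (N : ℕ) : Cons E P σ (fun k => π (k + N)) := by
  constructor
  · intro k
    show E (π (k + N)) (π (k + 1 + N))
    have : k + 1 + N = k + N + 1 := by omega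
    rw [this]
    exact h.1 (k + N)
  · intro k hk
    show π (k + 1 + N) = σ (π (k + N))
    have : k + 1 + N = k + N + 1 := by omega
    rw [this]
    exact h.2 (k + N) hk

/-- A winning region is closed under the winning strategy / opponent moves. -/
lemma winsFrom_step [Fintype S] {E : S → S → Prop} {P : Set S} {σ : S → S} {p : S → ℕ}
    {s : S} (hσ : ∀ u, E u (σ u)) (hw : WinsFrom E P σ p s) :
    (s ∈ P → WinsFrom E P σ p (σ s)) ∧ (s ∉ P → ∀ t, E s t → WinsFrom E P σ p t) := by
  have key : ∀ b : S, E s b → (s ∈ P → b = σ s) → WinsFrom E P σ p b := by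
    intro b hEb hPb ρ hρ0 hρc
    set π : ℕ → S := fun k => Nat.rec s (fun k _ => ρ k) k with hπ
    have hπ0 : π 0 = s := rfl
    have hπs : ∀ k, π (k + 1) = ρ k := fun k => rfl
    have hcons : Cons E P σ π := by
      constructor
      · intro k
        cases k with
        | zero => rw [hπ0, hπs]; rw [hρ0]; exact hEb
        | succ m => rw [hπs, hπs]; exact hρc.1 m
      · intro k hk
        cases k with
        | zero =>
          rw [hπ0] at hk
          rw [hπs, hρ0, hPb hk]
          rfl
        | succ m =>
          rw [hπs] at hk ⊢
          exact hρc.2 m hk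
    have := hw π hπ0 hcons
    have hshift : ρ = fun k => π (k + 1) := by funext k; rw [hπs]
    rw [hshift]
    rw [parity_shift]
    exact this
  constructor
  · intro hP
    exact key (σ s) (hσ s) (fun _ => rfl)
  · intro hP t hEt
    exact key t hEt (fun h => absurd h hP)

section Attractor

variable (E : S → S → Prop) (P X : Set S)

/-- Attractor construction for the player whose states are `P`. -/
def attrN : ℕ → Set S
  | 0 => X
  | n + 1 =>
    attrN n ∪ {s | (s ∈ P ∧ ∃ t, E s t ∧ t ∈ attrN n) ∨ (s ∉ P ∧ ∀ t, E s t → t ∈ attrN n)}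

def Attr : Set S := ⋃ n, attrN E P X n

lemma attrN_mono : Monotone (attrN E P X) := by
  refine monotone_nat_of_le_succ ?_
  intro n
  exact Set.subset_union_left

lemma X_subset_attr : X ⊆ Attr E P X := fun s hs => Set.mem_iUnion.2 ⟨0, hs⟩

open Classical in
/-- The rank of a state in the attractor (junk value `0` outside). -/
def rankOf (s : S) : ℕ := if h : ∃ n, s ∈ attrN E P X n then Nat.find h else 0

open Classical in
lemma mem_attrN_rankOf {s : S} (hs : s ∈ Attr E P X) : s ∈ attrN E P X (rankOf E P X s) := by
  obtain ⟨n, hn⟩ := Set.mem_iUnion.1 hs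
  have h2 : ∃ m, s ∈ attrN E P X m := ⟨n, hn⟩
  rw [rankOf, dif_pos h2]
  exact Nat.find_spec h2

open Classical in
lemma rankOf_le {s : S} {n : ℕ} (hn : s ∈ attrN E P X n) : rankOf E P X s ≤ n := by
  have h2 : ∃ m, s ∈ attrN E P X m := ⟨n, hn⟩
  rw [rankOf, dif_pos h2]
  exact Nat.find_le hn

lemma rankOf_zero {s : S} (hs : s ∈ Attr E P X) (h0 : rankOf E P X s = 0) : s ∈ X := by
  have := mem_attrN_rankOf E P X hs
  rw [h0] at this
  exact this

lemma attr_P_step {s : S} (hs : s ∈ Attr E P X) (hX : s ∉ X) (hP : s ∈ P) :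
    ∃ t, E s t ∧ t ∈ Attr E P X ∧ rankOf E P X t < rankOf E P X s := by
  have hmem := mem_attrN_rankOf E P X hs
  set n := rankOf E P X s with hn
  cases hcase : n with
  | zero => exact absurd (rankOf_zero E P X hs hcase) hX
  | succ m =>
    rw [hcase] at hmem
    have hnot : s ∉ attrN E P X m := by
      intro hc
      have := rankOf_le E P X hc
      omega
    rcases hmem with h | h
    · exact absurd h hnot
    rcases h with ⟨_, t, hEt, htm⟩ | ⟨hnp, _⟩
    · refine ⟨t, hEt, Set.mem_iUnion.2 ⟨m, htm⟩, ?_⟩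
      have := rankOf_le E P X htm
      omega
    · exact absurd hP hnp

lemma attr_opp_step {s : S} (hs : s ∈ Attr E P X) (hX : s ∉ X) (hP : s ∉ P) :
    ∀ t, E s t → t ∈ Attr E P X ∧ rankOf E P X t < rankOf E P X s := by
  have hmem := mem_attrN_rankOf E P X hs
  set n := rankOf E P X s with hn
  cases hcase : n with
  | zero => exact absurd (rankOf_zero E P X hs hcase) hX
  | succ m =>
    rw [hcase] at hmem
    have hnot : s ∉ attrN E P X m := by
      intro hc
      have := rankOf_le E P X hc
      omega
    rcases hmem with h | h
    · exact absurd h hnot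
    rcases h with ⟨hp, _⟩ | ⟨_, hall⟩
    · exact absurd hp hP
    · intro t hEt
      refine ⟨Set.mem_iUnion.2 ⟨m, hall t hEt⟩, ?_⟩
      have := rankOf_le E P X (hall t hEt)
      omega

lemma not_attr_P {s t : S} (hs : s ∉ Attr E P X) (hP : s ∈ P) (hEt : E s t) :
    t ∉ Attr E P X := by
  intro hc
  obtain ⟨n, hn⟩ := Set.mem_iUnion.1 hc
  exact hs (Set.mem_iUnion.2 ⟨n + 1, Or.inr (Or.inl ⟨hP, t, hEt, hn⟩)⟩)

lemma attr_bdd [Fintype S] : ∃ N, Attr E P X ⊆ attrN E P X N := by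
  have h : ∀ t : S, ∃ n, t ∈ Attr E P X → t ∈ attrN E P X n := by
    intro t
    by_cases ht : t ∈ Attr E P X
    · obtain ⟨n, hn⟩ := Set.mem_iUnion.1 ht
      exact ⟨n, fun _ => hn⟩
    · exact ⟨0, fun h => absurd h ht⟩
  choose f hf using h
  refine ⟨Finset.univ.sup f, fun t ht => ?_⟩
  exact attrN_mono E P X (Finset.le_sup (Finset.mem_univ t)) (hf t ht)

lemma not_attr_opp [Fintype S] {s : S} (hE : ∀ u : S, ∃ v, E u v)
    (hs : s ∉ Attr E P X) (hP : s ∉ P) : ∃ t, E s t ∧ t ∉ Attr E P X := by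
  by_contra hc
  push_neg at hc
  obtain ⟨N, hN⟩ := attr_bdd E P X
  have : s ∈ attrN E P X (N + 1) := Or.inr (Or.inr ⟨hP, fun t hEt => hN (hc t hEt)⟩)
  exact hs (Set.mem_iUnion.2 ⟨N + 1, this⟩)

/-- The attractor move: at an attractor `P`-state outside the target, go down in rank. -/
def attrMove (next : S → S) (s : S) : S :=
  if h : s ∈ Attr E P X ∧ s ∉ X ∧ s ∈ P then
    Classical.choose (attr_P_step E P X h.1 h.2.1 h.2.2)
  else next s

lemma attrMove_valid {next : S → S} (hnext : ∀ u, E u (next u)) (s : S) :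
    E s (attrMove E P X next s) := by
  rw [attrMove]
  split
  · next h => exact (Classical.choose_spec (attr_P_step E P X h.1 h.2.1 h.2.2)).1
  · exact hnext s

lemma attrMove_spec {next : S → S} {s : S} (h1 : s ∈ Attr E P X) (h2 : s ∉ X) (h3 : s ∈ P) :
    attrMove E P X next s ∈ Attr E P X ∧
      rankOf E P X (attrMove E P X next s) < rankOf E P X s := by
  rw [attrMove, dif_pos ⟨h1, h2, h3⟩]
  exact (Classical.choose_spec (attr_P_step E P X h1 h2 h3)).2

/-- A play starting in the attractor and following the attractor move at
`P`-states reaches the target. -/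
lemma attr_reach {next : S → S} :
    ∀ (n : ℕ) (π : ℕ → S), rankOf E P X (π 0) ≤ n → PlayOn E π →
      (∀ k, π k ∈ P → π k ∈ Attr E P X → π k ∉ X → π (k + 1) = attrMove E P X next (π k)) →
      π 0 ∈ Attr E P X → ∃ k, π k ∈ X := by
  intro n
  induction n with
  | zero =>
    intro π hr _ _ h0
    exact ⟨0, rankOf_zero E P X h0 (Nat.le_zero.1 hr)⟩
  | succ m ih =>
    intro π hr hplay hcons h0
    by_cases hX : π 0 ∈ X
    · exact ⟨0, hX⟩
    have hstep : π 1 ∈ Attr E P X ∧ rankOf E P X (π 1) < rankOf E P X (π 0) := by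
      by_cases hP : π 0 ∈ P
      · rw [hcons 0 hP h0 hX]
        exact attrMove_spec E P X h0 hX hP
      · exact attr_opp_step E P X h0 hX hP (π 1) (hplay 0)
    have hr1 : rankOf E P X ((fun j => π (j + 1)) 0) ≤ m := by
      have := hstep.2
      show rankOf E P X (π (0 + 1)) ≤ m
      norm_num
      omega
    obtain ⟨k, hk⟩ := ih (fun j => π (j + 1)) hr1 (fun j => hplay (j + 1))
      (fun j => hcons (j + 1)) hstep.1
    exact ⟨k + 1, hk⟩

end Attractor

end ZAux

namespace ZAux

variable {S : Type}

lemma lift_infSet_image (U : Set S) (π : ℕ → S) (hU : ∀ k, π k ∈ U) (pg : S → ℕ) :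
    pg '' infSet π = (fun a : ↥U => pg ↑a) '' infSet (fun k => (⟨π k, hU k⟩ : ↥U)) := by
  ext x
  constructor
  · rintro ⟨t, ht, rfl⟩
    obtain ⟨k0, _, hk0⟩ := ht 0
    have htU : t ∈ U := hk0 ▸ hU k0
    refine ⟨⟨t, htU⟩, ?_, rfl⟩
    intro N
    obtain ⟨k, hk, he⟩ := ht N
    exact ⟨k, hk, Subtype.ext he⟩
  · rintro ⟨a, ha, rfl⟩
    refine ⟨↑a, ?_, rfl⟩
    intro N
    obtain ⟨k, hk, he⟩ := ha N
    exact ⟨k, hk, congrArg Subtype.val he⟩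

lemma lift_parity (U : Set S) (π : ℕ → S) (hU : ∀ k, π k ∈ U) (pg : S → ℕ) :
    (fun k => (⟨π k, hU k⟩ : ↥U)) ∈ ParityObj (fun a : ↥U => pg ↑a) ↔ π ∈ ParityObj pg := by
  simp only [ParityObj, Set.mem_setOf_eq]
  rw [lift_infSet_image U π hU pg]

/-- Main lifting lemma: a play in the full game that stays inside a "good"
set of subgame states, following a global strategy that projects to a winning
subgame strategy, satisfies the parity objective. -/
lemma lift_play {E : S → S → Prop} {P₀ : Set S} (U : Set S)
    {σG : S → S} {σ' : ↥U → ↥U} {G : Set ↥U} {pg : S → ℕ}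
    (hGwin : ∀ a ∈ G,
      WinsFrom (fun a b : ↥U => E ↑a ↑b) {a : ↥U | ↑a ∈ P₀} σ' (fun a => pg ↑a) a)
    (h1 : ∀ a ∈ G, ↑a ∈ P₀ → σG ↑a = ↑(σ' a) ∧ σ' a ∈ G)
    (π : ℕ → S) (hcons : Cons E P₀ σG π)
    (h0 : ∃ h : π 0 ∈ U, (⟨π 0, h⟩ : ↥U) ∈ G)
    (h2 : ∀ k (h : π k ∈ U), (⟨π k, h⟩ : ↥U) ∈ G → π k ∉ P₀ →
      ∃ h' : π (k + 1) ∈ U, (⟨π (k + 1), h'⟩ : ↥U) ∈ G) :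
    π ∈ ParityObj pg := by
  have inv : ∀ k, ∃ h : π k ∈ U, (⟨π k, h⟩ : ↥U) ∈ G := by
    intro k
    induction k with
    | zero => exact h0
    | succ m ih =>
      obtain ⟨h, hg⟩ := ih
      by_cases hP : π m ∈ P₀
      · obtain ⟨he, hgood⟩ := h1 ⟨π m, h⟩ hg hP
        have hnext : π (m + 1) = ↑(σ' ⟨π m, h⟩) := by
          rw [hcons.2 m hP, he]
        refine ⟨hnext ▸ (σ' ⟨π m, h⟩).2, ?_⟩
        have : (⟨π (m + 1), hnext ▸ (σ' ⟨π m, h⟩).2⟩ : ↥U) = σ' ⟨π m, h⟩ :=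
          Subtype.ext hnext
        rw [this]
        exact hgood
      · exact h2 m h hg hP
  have hU : ∀ k, π k ∈ U := fun k => (inv k).choose
  set π' : ℕ → ↥U := fun k => (⟨π k, hU k⟩ : ↥U) with hπ'
  have hg : ∀ k, π' k ∈ G := fun k => (inv k).choose_spec
  have hcons' : Cons (fun a b : ↥U => E ↑a ↑b) {a : ↥U | ↑a ∈ P₀} σ' π' := by
    constructor
    · intro k
      exact hcons.1 k
    · intro k hk
      have hP : π k ∈ P₀ := hk
      obtain ⟨he, _⟩ := h1 (π' k) (hg k) hP
      apply Subtype.ext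
      show π (k + 1) = ↑(σ' (π' k))
      rw [hcons.2 k hP]
      exact he
  have := hGwin (π' 0) (hg 0) π' rfl hcons'
  rw [hπ'] at this
  rw [lift_parity U π hU pg] at this
  exact this

end ZAux

namespace ZAux

/-- The statement of positional determinacy for games with `n` states. -/
def ZStmt (n : ℕ) : Prop :=
  ∀ (S : Type) (_ : Fintype S), Fintype.card S = n →
    ∀ (E : S → S → Prop), (∀ s, ∃ t, E s t) → ∀ (P : Set S) (p : S → ℕ),
      ∃ (W : Set S) (σ τ : S → S), (∀ s, E s (σ s)) ∧ (∀ s, E s (τ s)) ∧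
        (∀ s ∈ W, WinsFrom E P σ p s) ∧
        (∀ s ∉ W, WinsFrom E Pᶜ τ (fun u => p u + 1) s)

lemma zstep (n : ℕ) (IH : ∀ m, m < n → ZStmt m) (S : Type) [Fintype S] [Nonempty S]
    (hcard : Fintype.card S = n) (E : S → S → Prop) (hE : ∀ s, ∃ t, E s t)
    (P : Set S) (p : S → ℕ) (hd : Even (sInf (p '' Set.univ))) :
    ∃ (W : Set S) (σ τ : S → S), (∀ s, E s (σ s)) ∧ (∀ s, E s (τ s)) ∧
      (∀ s ∈ W, WinsFrom E P σ p s) ∧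
      (∀ s ∉ W, WinsFrom E Pᶜ τ (fun u => p u + 1) s) := by
  classical
  set next : S → S := fun s => (hE s).choose with hnextdef
  have hnext : ∀ s, E s (next s) := fun s => (hE s).choose_spec
  set d := sInf (p '' Set.univ) with hddef
  obtain ⟨s₀, -, hs₀⟩ := Nat.sInf_mem ((Set.univ_nonempty (α := S)).image p)
  set T : Set S := {s | p s = d} with hTdef
  have hs₀T : s₀ ∈ T := hs₀
  set A := Attr E P T with hAdef
  set U := Aᶜ with hUdef
  have hUP : ∀ s, s ∈ U → s ∈ P → ∀ t, E s t → t ∈ U := by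
    intro s hs hP t hEt
    exact not_attr_P E P T hs hP hEt
  have hUsucc : ∀ s, s ∈ U → ∃ t, E s t ∧ t ∈ U := by
    intro s hs
    by_cases hP : s ∈ P
    · exact ⟨next s, hnext s, hUP s hs hP _ (hnext s)⟩
    · exact not_attr_opp E P T hE hs hP
  have hE' : ∀ a : ↥U, ∃ b : ↥U, E ↑a ↑b := by
    intro a
    obtain ⟨t, h1, h2⟩ := hUsucc ↑a a.2
    exact ⟨⟨t, h2⟩, h1⟩
  have hs₀A : s₀ ∈ A := X_subset_attr E P T hs₀T
  have hcardU : Fintype.card ↥U < n := by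
    rw [← hcard]
    exact Fintype.card_subtype_lt (x := s₀) (by simp [hUdef, hs₀A])
  obtain ⟨W', σ', τ', hσ', hτ', hW1', hW2'⟩ :=
    IH (Fintype.card ↥U) hcardU ↥U inferInstance rfl (fun a b => E ↑a ↑b) hE'
      {a : ↥U | ↑a ∈ P} (fun a => p ↑a)
  by_cases hall : ∀ a : ↥U, a ∈ W'
  · -- Case 1: player `P` wins everywhere in the subgame; she wins everywhere.
    set σ : S → S := fun s =>
      if h : s ∈ U then ↑(σ' ⟨s, h⟩) else attrMove E P T next s with hσdef
    have hσv : ∀ s, E s (σ s) := by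
      intro s
      simp only [hσdef]
      by_cases h : s ∈ U
      · rw [dif_pos h]; exact hσ' ⟨s, h⟩
      · rw [dif_neg h]; exact attrMove_valid E P T hnext s
    refine ⟨Set.univ, σ, next, hσv, hnext, ?_, fun s hs => absurd (Set.mem_univ s) hs⟩
    intro s _ π hπ0 hcons
    by_cases hcase : ∃ N, ∀ k, N ≤ k → π k ∈ U
    · obtain ⟨N, hN⟩ := hcase
      have key : (fun k => π (k + N)) ∈ ParityObj p := by
        refine lift_play U (σ' := σ') (G := Set.univ)
          (fun a _ => hW1' a (hall a)) ?_ _ (cons_shift hcons N) ?_ ?_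
        · intro a _ hP
          refine ⟨?_, Set.mem_univ _⟩
          show σ ↑a = _
          simp only [hσdef]
          rw [dif_pos a.2]
        · exact ⟨hN (0 + N) (by omega), Set.mem_univ _⟩
        · intro k h _ _
          exact ⟨hN (k + 1 + N) (by omega), Set.mem_univ _⟩
      rw [parity_shift] at key
      exact key
    · push_neg at hcase
      have hio : ∀ N, ∃ k, N ≤ k ∧ π k ∈ T := by
        intro N
        obtain ⟨k, hkN, hkU⟩ := hcase N
        have hkA : π k ∈ A := by
          by_contra hc
          exact hkU hc
        have hreach := attr_reach E P T (next := next) (rankOf E P T (π (0 + k)))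
          (fun j => π (j + k)) le_rfl (fun j => by
            show E (π (j + k)) (π (j + 1 + k))
            have he2 : j + 1 + k = j + k + 1 := by omega
            rw [he2]
            exact hcons.1 (j + k)) ?_ ?_
        · obtain ⟨j, hj⟩ := hreach
          exact ⟨j + k, by omega, hj⟩
        · intro j hjP hjA hjT
          show π (j + 1 + k) = _
          have he : j + 1 + k = j + k + 1 := by omega
          rw [he, hcons.2 (j + k) hjP]
          simp only [hσdef]
          rw [dif_neg (by simpa [hUdef] using hjA)]
        · show π (0 + k) ∈ A
          rw [Nat.zero_add]
          exact hkA
      obtain ⟨t, htT, htinf⟩ := exists_io_mem π T hio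
      show Even (sInf (p '' infSet π))
      have hle : sInf (p '' infSet π) ≤ d := Nat.sInf_le ⟨t, htinf, htT⟩
      have hge : d ≤ sInf (p '' infSet π) := by
        refine le_csInf ((infSet_nonempty π).image p) ?_
        rintro x ⟨u, -, rfl⟩
        exact Nat.sInf_le ⟨u, Set.mem_univ u, rfl⟩
      rw [le_antisymm hle hge]
      exact hd
  · -- Case 2: the opponent wins somewhere in the subgame.
    push_neg at hall
    obtain ⟨a₀, ha₀⟩ := hall
    set G' : Set ↥U := {a : ↥U | WinsFrom (fun a b : ↥U => E ↑a ↑b)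
      {a : ↥U | ↑a ∈ P}ᶜ τ' (fun a => p ↑a + 1) a} with hG'def
    have hG'sub : ∀ a, a ∉ W' → a ∈ G' := hW2'
    set D : Set S := {s : S | ∃ h : s ∈ U, (⟨s, h⟩ : ↥U) ∈ G'} with hDdef
    have hDU : D ⊆ U := fun s hs => hs.choose
    set B := Attr E Pᶜ D with hBdef
    set V := Bᶜ with hVdef
    have hDB : D ⊆ B := X_subset_attr E Pᶜ D
    have hVnP : ∀ s, s ∈ V → s ∉ P → ∀ t, E s t → t ∈ V := by
      intro s hs hP t hEt
      exact not_attr_P E Pᶜ D hs hP hEt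
    have hVsucc : ∀ s, s ∈ V → ∃ t, E s t ∧ t ∈ V := by
      intro s hs
      by_cases hP : s ∈ P
      · exact not_attr_opp E Pᶜ D hE hs (fun hc => hc hP)
      · exact ⟨next s, hnext s, hVnP s hs hP _ (hnext s)⟩
    have hE'' : ∀ a : ↥V, ∃ b : ↥V, E ↑a ↑b := by
      intro a
      obtain ⟨t, h1, h2⟩ := hVsucc ↑a a.2
      exact ⟨⟨t, h2⟩, h1⟩
    have ha₀D : (↑a₀ : S) ∈ D := ⟨a₀.2, hG'sub a₀ ha₀⟩
    have hcardV : Fintype.card ↥V < n := by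
      rw [← hcard]
      refine Fintype.card_subtype_lt (x := (↑a₀ : S)) ?_
      simp only [hVdef, Set.mem_compl_iff, not_not]
      exact hDB ha₀D
    obtain ⟨W'', σ'', τ'', hσ'', hτ'', hW1'', hW2''⟩ :=
      IH (Fintype.card ↥V) hcardV ↥V inferInstance rfl (fun a b => E ↑a ↑b) hE''
        {a : ↥V | ↑a ∈ P} (fun a => p ↑a)
    set Gσ : Set ↥V := {a : ↥V | WinsFrom (fun a b : ↥V => E ↑a ↑b)
      {a : ↥V | ↑a ∈ P} σ'' (fun a => p ↑a) a} with hGσdef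
    set Gτ : Set ↥V := {a : ↥V | WinsFrom (fun a b : ↥V => E ↑a ↑b)
      {a : ↥V | ↑a ∈ P}ᶜ τ'' (fun a => p ↑a + 1) a} with hGτdef
    set W : Set S := {s : S | ∃ h : s ∈ V, (⟨s, h⟩ : ↥V) ∈ Gσ} with hWdef
    set σ : S → S := fun s => if h : s ∈ V then ↑(σ'' ⟨s, h⟩) else next s with hσdef
    set τ : S → S := fun s =>
      if h : s ∈ V then ↑(τ'' ⟨s, h⟩)
      else if h2 : s ∈ D then ↑(τ' ⟨s, hDU h2⟩)
      else attrMove E Pᶜ D next s with hτdef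
    have hσv : ∀ s, E s (σ s) := by
      intro s
      simp only [hσdef]
      by_cases h : s ∈ V
      · rw [dif_pos h]; exact hσ'' ⟨s, h⟩
      · rw [dif_neg h]; exact hnext s
    have hτv : ∀ s, E s (τ s) := by
      intro s
      simp only [hτdef]
      by_cases h : s ∈ V
      · rw [dif_pos h]; exact hτ'' ⟨s, h⟩
      · rw [dif_neg h]
        by_cases h2 : s ∈ D
        · rw [dif_pos h2]; exact hτ' ⟨s, hDU h2⟩
        · rw [dif_neg h2]; exact attrMove_valid E Pᶜ D hnext s
    -- the trap argument inside `D`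
    have claimD : ∀ s ∈ D, ∀ π, π 0 = s → Cons E Pᶜ τ π →
        π ∈ ParityObj (fun u => p u + 1) := by
      intro s hsD π hπ0 hcons
      refine lift_play (P₀ := Pᶜ) (pg := fun u => p u + 1) U (σ' := τ') (G := G') (fun a ha => ha) ?_ π hcons ?_ ?_
      · intro a ha hPc
        have haD : (↑a : S) ∈ D := ⟨a.2, ha⟩
        constructor
        · show τ ↑a = _
          simp only [hτdef]
          rw [dif_neg (by
            simp only [hVdef, Set.mem_compl_iff, not_not]
            exact hDB haD), dif_pos haD]
        · exact (winsFrom_step hτ' ha).1 hPc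
      · rw [hπ0]
        obtain ⟨h, hg⟩ := hsD
        exact ⟨h, hg⟩
      · intro k h hg hP
        have hPmem : π k ∈ P := by
          by_contra hc
          exact hP hc
        have ht : π (k + 1) ∈ U := hUP (π k) h hPmem _ (hcons.1 k)
        refine ⟨ht, ?_⟩
        exact (winsFrom_step hτ' hg).2 (fun hc => hc hPmem) ⟨π (k + 1), ht⟩ (hcons.1 k)
    -- reaching `D` from the attractor `B`
    have claimB : ∀ s ∈ B, ∀ π, π 0 = s → Cons E Pᶜ τ π →
        π ∈ ParityObj (fun u => p u + 1) := by
      intro s hsB π hπ0 hcons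
      have hreach : ∃ k, π k ∈ D := by
        refine attr_reach E Pᶜ D (next := next) (rankOf E Pᶜ D (π 0)) π le_rfl
          hcons.1 ?_ (hπ0 ▸ hsB)
        intro k hkP hkA hkD
        rw [hcons.2 k hkP]
        simp only [hτdef]
        rw [dif_neg (by simpa [hVdef] using hkA), dif_neg hkD]
      obtain ⟨k, hk⟩ := hreach
      have := claimD (π (0 + k)) (by rw [Nat.zero_add]; exact hk)
        (fun j => π (j + k)) rfl (cons_shift hcons k)
      rw [parity_shift] at this
      exact this
    refine ⟨W, σ, τ, hσv, hτv, ?_, ?_⟩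
    · -- player `P` wins from `W`
      intro s hsW π hπ0 hcons
      refine lift_play V (σ' := σ'') (G := Gσ) (fun a ha => ha) ?_ π hcons ?_ ?_
      · intro a ha hP
        constructor
        · show σ ↑a = _
          simp only [hσdef]
          rw [dif_pos a.2]
        · exact (winsFrom_step hσ'' ha).1 hP
      · rw [hπ0]
        obtain ⟨h, hg⟩ := hsW
        exact ⟨h, hg⟩
      · intro k h hg hP
        have ht : π (k + 1) ∈ V := hVnP (π k) h hP _ (hcons.1 k)
        exact ⟨ht, (winsFrom_step hσ'' hg).2 hP ⟨π (k + 1), ht⟩ (hcons.1 k)⟩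
    · -- the opponent wins from the complement of `W`
      intro s hsW π hπ0 hcons
      by_cases hB : ∃ k, π k ∈ B
      · obtain ⟨k, hk⟩ := hB
        have := claimB (π (0 + k)) (by rw [Nat.zero_add]; exact hk)
          (fun j => π (j + k)) rfl (cons_shift hcons k)
        rw [parity_shift] at this
        exact this
      · push_neg at hB
        have hV : ∀ k, π k ∈ V := fun k => hB k
        have hsV : s ∈ V := hπ0 ▸ hV 0
        have hsG : (⟨s, hsV⟩ : ↥V) ∈ Gτ := by
          have h1 : (⟨s, hsV⟩ : ↥V) ∉ Gσ := by
            intro hc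
            exact hsW ⟨hsV, hc⟩
          have h2 : (⟨s, hsV⟩ : ↥V) ∉ W'' := fun hc => h1 (hW1'' _ hc)
          exact hW2'' _ h2
        refine lift_play (P₀ := Pᶜ) (pg := fun u => p u + 1) V (σ' := τ'') (G := Gτ) (fun a ha => ha) ?_ π hcons ?_ ?_
        · intro a ha hPc
          constructor
          · show τ ↑a = _
            simp only [hτdef]
            rw [dif_pos a.2]
          · exact (winsFrom_step hτ'' ha).1 hPc
        · rw [hπ0]
          exact ⟨hsV, hsG⟩
        · intro k h hg hP
          have hPmem : π k ∈ P := by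
            by_contra hc
            exact hP hc
          exact ⟨hV (k + 1),
            (winsFrom_step hτ'' hg).2 (fun hc => hc hPmem) ⟨π (k + 1), hV (k + 1)⟩
              (hcons.1 k)⟩

end ZAux

namespace ZAux

lemma zielonka : ∀ n, ZStmt n := by
  intro n
  induction n using Nat.strong_induction_on with
  | _ n IH =>
    intro S instF hcard E hE P p
    by_cases hS : Nonempty S
    · by_cases hd : Even (sInf (p '' Set.univ))
      · exact zstep n IH S hcard E hE P p hd
      · have hd1 : Even (sInf ((fun u => p u + 1) '' Set.univ)) := by
          have himg : (fun u => p u + 1) '' Set.univ = (· + 1) '' (p '' Set.univ) := by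
            rw [Set.image_image]
          rw [himg, sInf_image_add_one ((Set.univ_nonempty).image p)]
          exact Nat.even_add_one.2 hd
        obtain ⟨W0, σ0, τ0, hσ0, hτ0, h1, h2⟩ :=
          zstep n IH S hcard E hE Pᶜ (fun u => p u + 1) hd1
        refine ⟨W0ᶜ, τ0, σ0, hτ0, hσ0, ?_, ?_⟩
        · intro s hs π hπ0 hcons
          have hres := h2 s hs π hπ0 (by rw [compl_compl]; exact hcons)
          exact (parity_add_two π p).1 hres
        · intro s hs π hπ0 hcons
          exact h1 s (not_not.1 (fun hc => hs hc)) π hπ0 hcons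
    · have hempty : IsEmpty S := not_nonempty_iff.1 hS
      exact ⟨∅, id, id, fun s => (hempty.false s).elim, fun s => (hempty.false s).elim,
        fun s hs => absurd hs (Set.notMem_empty s),
        fun s _ => (hempty.false s).elim⟩

end ZAux


namespace ZBridge

open ZAux

variable {S : Type} [Fintype S]

/-- A memoryless function as a player-1 strategy. -/
def mk1 (G : DetGame S) (σ : S → S) (hσ : ∀ u, G.E u (σ u)) : G.Strat1 :=
  ⟨fun _ s => σ s, fun _ s _ => hσ s⟩

/-- A memoryless function as a player-2 strategy. -/
def mk2 (G : DetGame S) (τ : S → S) (hτ : ∀ u, G.E u (τ u)) : G.Strat2 :=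
  ⟨fun _ s => τ s, fun _ s _ => hτ s⟩

lemma outcome_zero (G : DetGame S) (s : S) (α : G.Strat1) (β : G.Strat2) :
    G.outcome s α β 0 = s := rfl

lemma outcome_succ (G : DetGame S) (s : S) (α : G.Strat1) (β : G.Strat2) (k : ℕ) :
    G.outcome s α β (k + 1) =
      if G.outcome s α β k ∈ G.S1 then
        α.f (G.histPair α β s k).1 (G.outcome s α β k)
      else β.f (G.histPair α β s k).1 (G.outcome s α β k) := rfl

lemma outcome_isPlay (G : DetGame S) (s : S) (α : G.Strat1) (β : G.Strat2) :
    G.IsPlay (G.outcome s α β) := by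
  intro k
  rw [outcome_succ]
  by_cases h : G.outcome s α β k ∈ G.S1
  · rw [if_pos h]
    exact α.valid _ _ h
  · rw [if_neg h]
    exact β.valid _ _ h

lemma outcome_cons1 (G : DetGame S) (s : S) (σ : S → S) (hσ : ∀ u, G.E u (σ u))
    (β : G.Strat2) : Cons G.E G.S1 σ (G.outcome s (mk1 G σ hσ) β) := by
  refine ⟨outcome_isPlay G s _ β, ?_⟩
  intro k hk
  rw [outcome_succ, if_pos hk]
  rfl

lemma outcome_cons2 (G : DetGame S) (s : S) (τ : S → S) (hτ : ∀ u, G.E u (τ u))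
    (α : G.Strat1) : Cons G.E G.S1ᶜ τ (G.outcome s α (mk2 G τ hτ)) := by
  refine ⟨outcome_isPlay G s α _, ?_⟩
  intro k hk
  rw [outcome_succ, if_neg hk]
  rfl

/-- Positional determinacy: every state in the player-1 winning set for parity
has a uniform memoryless winning strategy (in play form). -/
lemma pos_determinacy (G : DetGame S) (p : S → ℕ) (s : S)
    (hs : s ∈ G.Win1 (ParityObj p)) :
    ∃ σ : S → S, (∀ u, G.E u (σ u)) ∧ WinsFrom G.E G.S1 σ p s := by
  obtain ⟨W, σ, τ, hσ, hτ, h1, h2⟩ :=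
    zielonka (Fintype.card S) S inferInstance rfl G.E G.exists_succ G.S1 p
  by_cases hW : s ∈ W
  · exact ⟨σ, hσ, h1 s hW⟩
  · exfalso
    obtain ⟨α, hα⟩ := hs
    have hwin := hα (mk2 G τ hτ)
    have hcons := outcome_cons2 G s τ hτ α
    have h2' := h2 s hW (G.outcome s α (mk2 G τ hτ)) (outcome_zero G s α _) hcons
    rw [parity_succ_iff] at h2'
    exact h2' hwin

lemma win1_of_winsFrom (G : DetGame S) (p : S → ℕ) (s : S) (σ : S → S)
    (hσ : ∀ u, G.E u (σ u)) (hw : WinsFrom G.E G.S1 σ p s) :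
    s ∈ G.Win1 (ParityObj p) := by
  refine ⟨mk1 G σ hσ, fun β => ?_⟩
  exact hw _ (outcome_zero G s _ β) (outcome_cons1 G s σ hσ β)

lemma histPair_fst (G : DetGame S) (s : S) (α : G.Strat1) (β : G.Strat2) :
    ∀ k, (G.histPair α β s k).1 = (List.range k).map (G.outcome s α β) := by
  intro k
  induction k with
  | zero => rfl
  | succ m ih =>
    show (G.histPair α β s m).1 ++ [(G.histPair α β s m).2] = _
    rw [ih, List.range_succ, List.map_append]
    rfl

end ZBridge


namespace ZBridge

open ZAux

lemma moore_run_succ {I O : Type} (T : Moore I O) (w : ℕ → Set I) (j : ℕ) :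
    T.run w (j + 1) = T.tr (T.run w j) (w j) := rfl

lemma win_to_realizable {S I O : Type} [Fintype S] (SG : SynthGame S I O) (p : S → ℕ)
    (φ : Set (ℕ → Set I × Set O)) (hfor : SG.IsGameFor p φ)
    (hwin : SG.sI ∈ SG.toDetGame.Win1 (ParityObj p)) : MooreRealizable φ := by
  classical
  obtain ⟨σ, hσ, hw⟩ := pos_determinacy SG.toDetGame p SG.sI hwin
  set tr : S → Set I → S := fun q i =>
    if h : σ q ∉ SG.S1 then Classical.choose (SG.complete2 (σ q) h i) else q with htr
  set T : Moore I O := ⟨S, Finite.of_fintype S, SG.sI, tr, fun q => SG.labO (σ q)⟩ with hT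
  refine ⟨T, ?_⟩
  rintro x ⟨w, rfl⟩
  have hq0 : T.run w 0 = SG.sI := rfl
  have hq1 : ∀ j, T.run w j ∈ SG.S1 := by
    intro j
    induction j with
    | zero => exact SG.sI_mem
    | succ m ih =>
      have hb : σ (T.run w m) ∉ SG.S1 := by
        rcases SG.bipartite _ _ (hσ (T.run w m)) with ⟨_, h⟩ | ⟨h, _⟩
        · exact h
        · exact absurd ih h
      rw [moore_run_succ]
      show tr (T.run w m) (w m) ∈ SG.S1
      rw [htr]
      simp only []
      rw [dif_pos hb]
      obtain ⟨hE1, _⟩ := Classical.choose_spec (SG.complete2 (σ (T.run w m)) hb (w m))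
      rcases SG.bipartite _ _ hE1 with ⟨h1, _⟩ | ⟨_, h2⟩
      · exact absurd h1 hb
      · exact h2
  have hb : ∀ j, σ (T.run w j) ∉ SG.S1 := by
    intro j
    rcases SG.bipartite _ _ (hσ (T.run w j)) with ⟨_, h⟩ | ⟨h, _⟩
    · exact h
    · exact absurd (hq1 j) h
  have hqsucc : ∀ j, T.run w (j + 1) =
      Classical.choose (SG.complete2 (σ (T.run w j)) (hb j) (w j)) := by
    intro j
    rw [moore_run_succ]
    show tr (T.run w j) (w j) = _
    rw [htr]
    simp only []
    rw [dif_pos (hb j)]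
  set π : ℕ → S := fun k => if Even k then T.run w (k / 2) else σ (T.run w (k / 2)) with hπ
  have hπe : ∀ j, π (2 * j) = T.run w j := by
    intro j
    rw [hπ]
    simp only []
    rw [if_pos ⟨j, by omega⟩]
    have h2 : 2 * j / 2 = j := by omega
    rw [h2]
  have hπo : ∀ j, π (2 * j + 1) = σ (T.run w j) := by
    intro j
    rw [hπ]
    simp only []
    rw [if_neg (by simp [Nat.even_add_one, parity_simps])]
    have h2 : (2 * j + 1) / 2 = j := by omega
    rw [h2]
  have hplay : SG.toDetGame.IsPlay π := by
    intro k
    rcases Nat.even_or_odd k with ⟨j, hj⟩ | ⟨j, hj⟩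
    · have hk : k = 2 * j := by omega
      subst hk
      rw [hπe j, show 2 * j + 1 = 2 * j + 1 from rfl, hπo j]
      exact hσ _
    · have hk : k = 2 * j + 1 := by omega
      subst hk
      have h2 : 2 * j + 1 + 1 = 2 * (j + 1) := by omega
      rw [hπo j, h2, hπe (j + 1), hqsucc j]
      exact (Classical.choose_spec (SG.complete2 (σ (T.run w j)) (hb j) (w j))).1
  have hπ0 : π 0 = SG.sI := by
    have := hπe 0
    rw [show 2 * 0 = 0 from rfl] at this
    rw [this]
    exact hq0
  have hcons : Cons SG.toDetGame.E SG.S1 σ π := by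
    refine ⟨hplay, ?_⟩
    intro k hk
    rcases Nat.even_or_odd k with ⟨j, hj⟩ | ⟨j, hj⟩
    · have hk2 : k = 2 * j := by omega
      subst hk2
      rw [show 2 * j + 1 = 2 * j + 1 from rfl, hπo j, hπe j]
    · have hk2 : k = 2 * j + 1 := by omega
      subst hk2
      rw [hπo j] at hk
      exact absurd hk (hb j)
  have hpar : π ∈ ParityObj p := hw π hπ0 hcons
  have hword := (hfor π hplay hπ0).1 hpar
  have heq : T.output w = SG.word π := by
    funext i
    show (w i, T.out (T.run w i)) = (SG.labI (π (2 * i + 2)), SG.labO (π (2 * i + 1)))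
    have h2 : 2 * i + 2 = 2 * (i + 1) := by omega
    rw [h2, hπe (i + 1), hπo i, hqsucc i]
    obtain ⟨_, hlab⟩ := Classical.choose_spec (SG.complete2 (σ (T.run w i)) (hb i) (w i))
    rw [hlab]
  rw [heq]
  exact hword

end ZBridge


namespace ZBridge

open ZAux

/-- Iterated transducer state along a history list. -/
def stAux {S Q : Type} (step : Q → S → Q) (q0 : Q) (ℓ : List S) (dflt : S) : ℕ → Q
  | 0 => q0
  | m + 1 => step (stAux step q0 ℓ dflt m) (ℓ.getD (2 * m + 2) dflt)

lemma realizable_to_win {S I O : Type} [Fintype S] (SG : SynthGame S I O) (p : S → ℕ)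
    (φ : Set (ℕ → Set I × Set O)) (hfor : SG.IsGameFor p φ)
    (hreal : MooreRealizable φ) : SG.sI ∈ SG.toDetGame.Win1 (ParityObj p) := by
  classical
  obtain ⟨T, hT⟩ := hreal
  set stA : List S → ℕ → T.Q :=
    fun ℓ m => stAux (fun q s => T.tr q (SG.labI s)) T.qI ℓ SG.sI m with hstA
  set f : List S → S → S := fun h s =>
    if h1 : s ∈ SG.S1 then
      Classical.choose (SG.complete1 s h1 (T.out (stA (h ++ [s]) (h.length / 2))))
    else (SG.exists_succ s).choose with hf
  have hval : ∀ h s, s ∈ SG.S1 → SG.toDetGame.E s (f h s) := by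
    intro h s hs
    rw [hf]
    simp only []
    rw [dif_pos hs]
    exact (Classical.choose_spec (SG.complete1 s hs _)).1
  set α : SG.toDetGame.Strat1 := ⟨f, hval⟩ with hα
  refine ⟨α, ?_⟩
  intro β
  set π := SG.toDetGame.outcome SG.sI α β with hπdef
  have hπ0 : π 0 = SG.sI := rfl
  have hplay : SG.toDetGame.IsPlay π := outcome_isPlay SG.toDetGame SG.sI α β
  have halt : ∀ j, π (2 * j) ∈ SG.S1 ∧ π (2 * j + 1) ∉ SG.S1 := by
    intro j
    induction j with
    | zero =>
      have h0 : π (2 * 0) = SG.sI := hπ0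
      constructor
      · rw [h0]; exact SG.sI_mem
      · rcases SG.bipartite _ _ (hplay (2 * 0)) with ⟨_, h⟩ | ⟨h, _⟩
        · exact h
        · rw [h0] at h; exact absurd SG.sI_mem h
    | succ m ih =>
      have he1 : 2 * (m + 1) = 2 * m + 1 + 1 := by omega
      have hmem : π (2 * (m + 1)) ∈ SG.S1 := by
        rw [he1]
        rcases SG.bipartite _ _ (hplay (2 * m + 1)) with ⟨h, _⟩ | ⟨_, h⟩
        · exact absurd h ih.2
        · exact h
      refine ⟨hmem, ?_⟩
      rcases SG.bipartite _ _ (hplay (2 * (m + 1))) with ⟨_, h⟩ | ⟨h, _⟩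
      · exact h
      · exact absurd hmem h
  set w : ℕ → Set I := fun i => SG.labI (π (2 * i + 2)) with hwdef
  have hstrun : ∀ j m, m ≤ j →
      stA ((List.range (2 * j)).map π ++ [π (2 * j)]) m = T.run w m := by
    intro j
    have hℓ : (List.range (2 * j)).map π ++ [π (2 * j)] = (List.range (2 * j + 1)).map π := by
      rw [List.range_succ, List.map_append]
      rfl
    intro m hm
    induction m with
    | zero => rfl
    | succ r ih =>
      have hr : r ≤ j := by omega
      have hget : ((List.range (2 * j)).map π ++ [π (2 * j)]).getD (2 * r + 2) SG.sI
          = π (2 * r + 2) := by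
        rw [hℓ]
        have hlen : 2 * r + 2 < ((List.range (2 * j + 1)).map π).length := by
          rw [List.length_map, List.length_range]
          omega
        rw [List.getD_eq_getElem _ _ hlen]
        rw [List.getElem_map]
        congr 1
        exact List.getElem_range _
      show T.tr (stA ((List.range (2 * j)).map π ++ [π (2 * j)]) r)
        (SG.labI (((List.range (2 * j)).map π ++ [π (2 * j)]).getD (2 * r + 2) SG.sI))
          = T.run w (r + 1)
      rw [ih hr, hget]
      rfl
  have hO : ∀ j, SG.labO (π (2 * j + 1)) = T.out (T.run w j) := by
    intro j
    have h1 : π (2 * j) ∈ SG.S1 := (halt j).1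
    have hstep : π (2 * j + 1) =
        α.f (SG.toDetGame.histPair α β SG.sI (2 * j)).1 (π (2 * j)) := by
      rw [hπdef]
      rw [outcome_succ, if_pos h1]
    rw [hstep, histPair_fst]
    show SG.labO (f ((List.range (2 * j)).map (SG.toDetGame.outcome SG.sI α β)) (π (2 * j))) = _
    rw [← hπdef]
    rw [hf]
    simp only []
    rw [dif_pos h1]
    have hlen : ((List.range (2 * j)).map π).length / 2 = j := by
      rw [List.length_map, List.length_range]
      omega
    have hspec := (Classical.choose_spec (SG.complete1 (π (2 * j)) h1
      (T.out (stA ((List.range (2 * j)).map π ++ [π (2 * j)])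
        (((List.range (2 * j)).map π).length / 2))))).2
    rw [hspec, hlen, hstrun j j le_rfl]
  have hword : SG.word π = T.output w := by
    funext i
    show (SG.labI (π (2 * i + 2)), SG.labO (π (2 * i + 1))) = (w i, T.out (T.run w i))
    rw [hO i]
  exact (hfor π hplay hπ0).2 (hT ⟨w, hword⟩)

end ZBridge


theorem synthesis_game_realizability {S I O : Type} [Fintype S] [Fintype I]
    [Fintype O] (SG : SynthGame S I O) (p : S → ℕ)
    (φ : Set (ℕ → Set I × Set O)) (hfor : SG.IsGameFor p φ) :
    MooreRealizable φ ↔ SG.sI ∈ SG.toDetGame.Win1 (ParityObj p) :=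
  ⟨fun h => ZBridge.realizable_to_win SG p φ hfor h,
   fun h => ZBridge.win_to_realizable SG p φ hfor h⟩
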